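/- In the SEIR-type model with constant parameters and no quarantine flows (s_q = q_s = 0), if R_0 := β/(i_r+i_h+i_u) < 1 and S(t) ≤ P_T for all t, then for any nonnegative initial data the sequence L(t)+I(t) converges to 0 as t → ∞, provided 0 < i_l ≤ 1 and 0 < i_r+i_h+i_u ≤ 1. -/

import Mathlib

/-- If R₀ < 1 then L(t)+I(t) → 0 in the constant-parameter model. -/
theorem seir_extinction_of_infection
    (S L I : ℕ → ℝ) (β il ir ih iu PT : ℝ) (hPT : 0 < PT)
    (hβ : 0 < β) (hil : 0 < il) (hil1 : il ≤ 1)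
    (hγ : 0 < ir + ih + iu) (hγ1 : ir + ih + iu ≤ 1)
    (hS : ∀ t, S (t + 1) = S t - β * S t * I t / PT)
    (hL : ∀ t, L (t + 1) = L t + β * S t * I t / PT - il * L t)
    (hI : ∀ t, I (t + 1) = I t + il * L t - (ir + ih + iu) * I t)
    (hSpos : ∀ t, 0 ≤ S t) (hLpos : ∀ t, 0 ≤ L t) (hIpos : ∀ t, 0 ≤ I t)
    (hSbound : ∀ t, S t ≤ PT)
    (hR0 : β / (ir + ih + iu) < 1) :
    Filter.Tendsto (fun t => L t + I t) Filter.atTop (nhds 0) := by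
  set γ : ℝ := ir + ih + iu with hγdef
  have hβγ : β < γ := by
    have := (div_lt_one hγ).mp hR0
    linarith
  set a : ℝ := (1 + γ / β) / 2 with ha
  have hγβ1 : 1 < γ / β := (one_lt_div hβ).mpr hβγ
  have ha1 : 1 < a := by rw [ha]; linarith
  have ha0 : 0 < a := by linarith
  have haβ : a * β < γ := by
    have h : a * β = (β + γ) / 2 := by
      rw [ha]; field_simp
    rw [h]; linarith
  have haβ0 : 0 < a * β := mul_pos ha0 hβ
  set c : ℝ := max (1 - il * (a - 1) / a) (1 - γ + a * β) with hc
  have hc0 : 0 ≤ c := le_trans (by linarith) (le_max_right _ _)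
  have hc1 : c < 1 := by
    apply max_lt
    · have hpos : 0 < il * (a - 1) / a :=
        div_pos (mul_pos hil (by linarith)) ha0
      linarith
    · linarith
  clear_value γ a c
  have key : ∀ t, a * L (t + 1) + I (t + 1) ≤ c * (a * L t + I t) := by
    intro t
    rw [hL t, hI t]
    have hSI : a * (β * S t * I t / PT) ≤ a * β * I t := by
      have h1 : β * S t * I t / PT ≤ β * I t := by
        rw [div_le_iff₀ hPT]
        nlinarith [mul_nonneg (mul_nonneg hβ.le (hIpos t)) (sub_nonneg.mpr (hSbound t))]
      have := mul_le_mul_of_nonneg_left h1 ha0.le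
      linarith
    have hca : a - il * (a - 1) ≤ c * a := by
      have h1 : (1 - il * (a - 1) / a) ≤ c := hc ▸ le_max_left _ _
      have h2 : (1 - il * (a - 1) / a) * a = a - il * (a - 1) := by
        field_simp
      nlinarith
    have hcI : (1 - γ + a * β) * I t ≤ c * I t :=
      mul_le_mul_of_nonneg_right (hc ▸ le_max_right _ _) (hIpos t)
    have hcL : (a - il * (a - 1)) * L t ≤ c * a * L t :=
      mul_le_mul_of_nonneg_right hca (hLpos t)
    linarith [hcI, hcL, hSI]
  have bound : ∀ t, a * L t + I t ≤ c ^ t * (a * L 0 + I 0) := by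
    intro t
    induction t with
    | zero => simp
    | succ n ihn =>
        calc a * L (n + 1) + I (n + 1) ≤ c * (a * L n + I n) := key n
          _ ≤ c * (c ^ n * (a * L 0 + I 0)) := mul_le_mul_of_nonneg_left ihn hc0
          _ = c ^ (n + 1) * (a * L 0 + I 0) := by ring
  have h0 : Filter.Tendsto (fun t : ℕ => c ^ t * (a * L 0 + I 0)) Filter.atTop (nhds 0) := by
    have := (tendsto_pow_atTop_nhds_zero_of_lt_one hc0 hc1).mul_const (a * L 0 + I 0)
    simpa using this
  apply squeeze_zero (fun t => add_nonneg (hLpos t) (hIpos t)) _ h0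
  intro t
  have hL' : L t ≤ a * L t := by nlinarith [hLpos t]
  have := bound t
  linarith
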